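/- Let A₁, Â₁ ∈ ℝ^{I₁×r₁} and A₂, Â₂ ∈ ℝ^{I₂×r₂} all have orthonormal columns. Let M = A₁ ⊗ A₂ and M̂ = Â₁ ⊗ Â₂ (Kronecker products). Then ‖sin Θ(M, M̂)‖ ≤ √2 · max{‖sin Θ(A₁, Â₁)‖, ‖sin Θ(A₂, Â₂)‖}. -/

import Mathlib

open Matrix Kronecker

/-- Smallest singular value of a real matrix. -/
noncomputable def sMin {m n : Type*} [Fintype m] [Fintype n] [DecidableEq n]
    (A : Matrix m n ℝ) : ℝ :=
  Real.sqrt (⨅ i, (show (Aᵀ * A).IsHermitian by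
    simpa [Matrix.conjTranspose_eq_transpose_of_trivial] using
      Matrix.isHermitian_conjTranspose_mul_self A).eigenvalues i)

/-- Sine of the largest canonical angle between the column spaces of two matrices
with orthonormal columns: `‖sin Θ(X,Y)‖ = √(1 − σ_min(XᵀY)²)`. -/
noncomputable def sinTheta {m n : Type*} [Fintype m] [Fintype n] [DecidableEq n]
    (X Y : Matrix m n ℝ) : ℝ :=
  Real.sqrt (1 - sMin (Xᵀ * Y) ^ 2)

/-- Rayleigh-type lower bound: if `H - c•1` is PSD then all eigenvalues of `H` are `≥ c`. -/
lemma eig_ge_aux {n : Type*} [Fintype n] [DecidableEq n] {H : Matrix n n ℝ}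
    (hH : H.IsHermitian) {c : ℝ} (h : (H - c • 1).PosSemidef) (i : n) :
    c ≤ hH.eigenvalues i := by
  set v : n → ℝ := ⇑(hH.eigenvectorBasis i) with hv
  have hunit : star v ⬝ᵥ v = 1 := by
    have h1 := hH.eigenvectorBasis.orthonormal.1 i
    have := EuclideanSpace.inner_eq_star_dotProduct (𝕜 := ℝ)
      (hH.eigenvectorBasis i) (hH.eigenvectorBasis i)
    rw [real_inner_self_eq_norm_sq, h1] at this
    simpa using this.symm
  have h2 := h.dotProduct_mulVec_nonneg v
  have h3 : hH.eigenvalues i = star v ⬝ᵥ (H *ᵥ v) := by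
    simpa using hH.eigenvalues_eq i
  rw [sub_mulVec, dotProduct_sub, smul_mulVec, one_mulVec, dotProduct_smul,
    hunit, smul_eq_mul, mul_one, sub_nonneg] at h2
  rw [h3]; exact h2

/-- Rayleigh-type upper bound: if `c•1 - H` is PSD then all eigenvalues of `H` are `≤ c`. -/
lemma eig_le_aux {n : Type*} [Fintype n] [DecidableEq n] {H : Matrix n n ℝ}
    (hH : H.IsHermitian) {c : ℝ} (h : (c • 1 - H).PosSemidef) (i : n) :
    hH.eigenvalues i ≤ c := by
  set v : n → ℝ := ⇑(hH.eigenvectorBasis i) with hv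
  have hunit : star v ⬝ᵥ v = 1 := by
    have h1 := hH.eigenvectorBasis.orthonormal.1 i
    have := EuclideanSpace.inner_eq_star_dotProduct (𝕜 := ℝ)
      (hH.eigenvectorBasis i) (hH.eigenvectorBasis i)
    rw [real_inner_self_eq_norm_sq, h1] at this
    simpa using this.symm
  have h2 := h.dotProduct_mulVec_nonneg v
  have h3 : hH.eigenvalues i = star v ⬝ᵥ (H *ᵥ v) := by
    simpa using hH.eigenvalues_eq i
  rw [sub_mulVec, dotProduct_sub, smul_mulVec, one_mulVec, dotProduct_smul,
    hunit, smul_eq_mul, mul_one, sub_nonneg] at h2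
  rw [h3]; exact h2

/-- If all eigenvalues of a Hermitian matrix are `≥ c` then `H - c•1` is PSD. -/
lemma shift_psd_aux {n : Type*} [Fintype n] [DecidableEq n] {H : Matrix n n ℝ}
    (hH : H.IsHermitian) {c : ℝ} (h : ∀ i, c ≤ hH.eigenvalues i) :
    (H - c • 1).PosSemidef := by
  have hU : (hH.eigenvectorUnitary : Matrix n n ℝ) * star (hH.eigenvectorUnitary : Matrix n n ℝ)
      = 1 := (Matrix.mem_unitaryGroup_iff).mp hH.eigenvectorUnitary.2
  have key : H - c • 1 =
      (hH.eigenvectorUnitary : Matrix n n ℝ) * diagonal (fun i => hH.eigenvalues i - c) *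
        star (hH.eigenvectorUnitary : Matrix n n ℝ) := by
    conv_lhs => rw [hH.spectral_theorem]
    have : diagonal (fun i => hH.eigenvalues i - c) =
        diagonal (RCLike.ofReal ∘ hH.eigenvalues) - c • (1 : Matrix n n ℝ) := by
      rw [smul_one_eq_diagonal, ← diagonal_sub]
      rfl
    rw [this, mul_sub, sub_mul]
    congr 1
    rw [Matrix.mul_smul, mul_one, Matrix.smul_mul, hU]
  rw [key]
  exact (Matrix.posSemidef_diagonal_iff.mpr
    (fun i => sub_nonneg.mpr (h i))).mul_mul_conjTranspose_same _

/-- Kronecker product of PSD matrices is PSD. -/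
lemma psd_kron_aux {m n : Type*} [Fintype m] [Fintype n] [DecidableEq m] [DecidableEq n]
    {A : Matrix m m ℝ} {B : Matrix n n ℝ} (hA : A.PosSemidef) (hB : B.PosSemidef) :
    (A ⊗ₖ B).PosSemidef := by
  exact hA.kronecker hB

lemma psd_smul_aux {n : Type*} [Fintype n] {A : Matrix n n ℝ} {c : ℝ} (hc : 0 ≤ c)
    (hA : A.PosSemidef) : (c • A).PosSemidef := by
  refine ⟨?_, fun x => ?_⟩
  · unfold Matrix.IsHermitian
    rw [conjTranspose_smul, hA.1.eq, star_trivial]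
  · exact (hA.smul hc).2 x

lemma kron_shift_key {m n : Type*} [Fintype m] [Fintype n] [DecidableEq m] [DecidableEq n]
    (G₁ : Matrix m m ℝ) (G₂ : Matrix n n ℝ) (e₁ e₂ : ℝ) :
    G₁ ⊗ₖ G₂ - (e₁ * e₂) • (1 : Matrix (m × n) (m × n) ℝ) =
      (G₁ - e₁ • 1) ⊗ₖ G₂ + e₁ • ((1 : Matrix m m ℝ) ⊗ₖ (G₂ - e₂ • 1)) := by
  have h1 : G₁ = (G₁ - e₁ • 1) + e₁ • (1 : Matrix m m ℝ) := by abel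
  have h2 : (1 : Matrix m m ℝ) ⊗ₖ G₂ =
      (1 : Matrix m m ℝ) ⊗ₖ (G₂ - e₂ • 1) + e₂ • (1 : Matrix (m × n) (m × n) ℝ) := by
    rw [← Matrix.one_kronecker_one, ← Matrix.kronecker_smul, ← Matrix.kronecker_add]
    rw [sub_add_cancel]
  conv_lhs => rw [h1, Matrix.add_kronecker, Matrix.smul_kronecker, h2]
  rw [smul_add, smul_smul]; abel

/-- `1 - BᵀB` is PSD when `B = Aᵀ * Ah` with `A, Ah` having orthonormal columns. -/
lemma one_sub_gram_psd {I r : ℕ} {A Ah : Matrix (Fin I) (Fin r) ℝ}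
    {B : Matrix (Fin r) (Fin r) ℝ}
    (hA : Aᵀ * A = 1) (hAh : Ahᵀ * Ah = 1) (hB : B = Aᵀ * Ah) :
    ((1 : Matrix (Fin r) (Fin r) ℝ) - Bᵀ * B).PosSemidef := by
  have e0 : Ahᵀ * A = Bᵀ := by rw [hB, transpose_mul, transpose_transpose]
  have key : (Ah - A * B)ᵀ * (Ah - A * B) = 1 - Bᵀ * B := by
    have ht : (Ah - A * B)ᵀ = Ahᵀ - Bᵀ * Aᵀ := by rw [transpose_sub, transpose_mul]
    rw [ht, Matrix.sub_mul, Matrix.mul_sub, Matrix.mul_sub, hAh, ← Matrix.mul_assoc Ahᵀ A B, e0,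
      Matrix.mul_assoc Bᵀ Aᵀ Ah, ← hB, Matrix.mul_assoc Bᵀ Aᵀ (A * B), ← Matrix.mul_assoc Aᵀ A B, hA, Matrix.one_mul]
    abel
  rw [← key]
  have := Matrix.posSemidef_conjTranspose_mul_self (Ah - A * B)
  rwa [conjTranspose_eq_transpose_of_trivial] at this

/-- For `A₁, Â₁ ∈ ℝ^{I₁×r₁}`, `A₂, Â₂ ∈ ℝ^{I₂×r₂}` with orthonormal columns and
`M = A₁ ⊗ A₂`, `M̂ = Â₁ ⊗ Â₂`, one has
`‖sin Θ(M, M̂)‖ ≤ √2 · max{‖sin Θ(A₁, Â₁)‖, ‖sin Θ(A₂, Â₂)‖}`. -/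
theorem sinTheta_kronecker_two {I₁ I₂ r₁ r₂ : ℕ}
    (A₁ Ah₁ : Matrix (Fin I₁) (Fin r₁) ℝ) (A₂ Ah₂ : Matrix (Fin I₂) (Fin r₂) ℝ)
    (hA₁ : A₁ᵀ * A₁ = 1) (hAh₁ : Ah₁ᵀ * Ah₁ = 1)
    (hA₂ : A₂ᵀ * A₂ = 1) (hAh₂ : Ah₂ᵀ * Ah₂ = 1) :
    sinTheta (A₁ ⊗ₖ A₂) (Ah₁ ⊗ₖ Ah₂) ≤
      Real.sqrt 2 * max (sinTheta A₁ Ah₁) (sinTheta A₂ Ah₂) := by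
  set B₁ := A₁ᵀ * Ah₁ with hB₁
  set B₂ := A₂ᵀ * Ah₂ with hB₂
  -- the Gram matrices
  set e₁ := ⨅ i, (show (B₁ᵀ * B₁).IsHermitian by simpa [Matrix.conjTranspose_eq_transpose_of_trivial] using Matrix.isHermitian_conjTranspose_mul_self B₁).eigenvalues i with he₁
  set e₂ := ⨅ i, (show (B₂ᵀ * B₂).IsHermitian by simpa [Matrix.conjTranspose_eq_transpose_of_trivial] using Matrix.isHermitian_conjTranspose_mul_self B₂).eigenvalues i with he₂
  set e := ⨅ i, (show ((B₁ ⊗ₖ B₂)ᵀ * (B₁ ⊗ₖ B₂)).IsHermitian by simpa [Matrix.conjTranspose_eq_transpose_of_trivial] using Matrix.isHermitian_conjTranspose_mul_self (B₁ ⊗ₖ B₂)).eigenvalues i with he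
  have hM : (A₁ ⊗ₖ A₂)ᵀ * (Ah₁ ⊗ₖ Ah₂) = B₁ ⊗ₖ B₂ := by
    rw [← Matrix.kroneckerMap_transpose, ← Matrix.mul_kronecker_mul]
  have hGram : (B₁ ⊗ₖ B₂)ᵀ * (B₁ ⊗ₖ B₂) = (B₁ᵀ * B₁) ⊗ₖ (B₂ᵀ * B₂) := by
    rw [← Matrix.kroneckerMap_transpose, ← Matrix.mul_kronecker_mul]
  have hG₁psd : (B₁ᵀ * B₁).PosSemidef := by
    have := Matrix.posSemidef_conjTranspose_mul_self B₁
    rwa [conjTranspose_eq_transpose_of_trivial] at this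
  have hG₂psd : (B₂ᵀ * B₂).PosSemidef := by
    have := Matrix.posSemidef_conjTranspose_mul_self B₂
    rwa [conjTranspose_eq_transpose_of_trivial] at this
  -- nonnegativity of the infima
  have he₁0 : 0 ≤ e₁ := Real.iInf_nonneg fun i => hG₁psd.eigenvalues_nonneg i
  have he₂0 : 0 ≤ e₂ := Real.iInf_nonneg fun i => hG₂psd.eigenvalues_nonneg i
  have he0 : 0 ≤ e := Real.iInf_nonneg fun i =>
    Matrix.eigenvalues_conjTranspose_mul_self_nonneg _ i
  -- upper bounds e₁ ≤ 1, e₂ ≤ 1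
  have hbdd₁ : BddBelow (Set.range fun i =>
      (show (B₁ᵀ * B₁).IsHermitian by simpa [Matrix.conjTranspose_eq_transpose_of_trivial] using Matrix.isHermitian_conjTranspose_mul_self B₁).eigenvalues i) := Set.Finite.bddBelow
    (Set.finite_range _)
  have hbdd₂ : BddBelow (Set.range fun i =>
      (show (B₂ᵀ * B₂).IsHermitian by simpa [Matrix.conjTranspose_eq_transpose_of_trivial] using Matrix.isHermitian_conjTranspose_mul_self B₂).eigenvalues i) := Set.Finite.bddBelow
    (Set.finite_range _)
  have he₁1 : e₁ ≤ 1 := by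
    rcases isEmpty_or_nonempty (Fin r₁) with h | h
    · rw [he₁, iInf_of_isEmpty, Real.sInf_empty]; norm_num
    · obtain ⟨i⟩ := h
      refine (ciInf_le hbdd₁ i).trans ?_
      refine eig_le_aux _ ?_ i
      rw [one_smul]
      exact one_sub_gram_psd hA₁ hAh₁ hB₁
  have he₂1 : e₂ ≤ 1 := by
    rcases isEmpty_or_nonempty (Fin r₂) with h | h
    · rw [he₂, iInf_of_isEmpty, Real.sInf_empty]; norm_num
    · obtain ⟨i⟩ := h
      refine (ciInf_le hbdd₂ i).trans ?_
      refine eig_le_aux _ ?_ i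
      rw [one_smul]
      exact one_sub_gram_psd hA₂ hAh₂ hB₂
  -- the key lower bound e ≥ e₁ * e₂
  have hshift : ((B₁ ⊗ₖ B₂)ᵀ * (B₁ ⊗ₖ B₂) - (e₁ * e₂) • 1).PosSemidef := by
    rw [hGram, kron_shift_key]
    have h1 : (B₁ᵀ * B₁ - e₁ • 1).PosSemidef :=
      shift_psd_aux _ fun i => ciInf_le hbdd₁ i
    have h2 : (B₂ᵀ * B₂ - e₂ • 1).PosSemidef :=
      shift_psd_aux _ fun i => ciInf_le hbdd₂ i
    exact (psd_kron_aux h1 hG₂psd).add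
      (psd_smul_aux he₁0 (psd_kron_aux Matrix.PosSemidef.one h2))
  have hkey : e₁ * e₂ ≤ e := by
    rcases isEmpty_or_nonempty (Fin r₁ × Fin r₂) with h | h
    · have hzero : e₁ = 0 ∨ e₂ = 0 := by
        rcases isEmpty_or_nonempty (Fin r₁) with h1 | h1
        · left; rw [he₁, iInf_of_isEmpty, Real.sInf_empty]
        rcases isEmpty_or_nonempty (Fin r₂) with h2 | h2
        · right; rw [he₂, iInf_of_isEmpty, Real.sInf_empty]
        exact ((h.false (h1.some, h2.some)).elim)
      have : e = 0 := by rw [he, iInf_of_isEmpty, Real.sInf_empty]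
      rcases hzero with h0 | h0 <;> rw [this, h0] <;> simp
    · exact le_ciInf fun i => eig_ge_aux _ hshift i
  -- now the numeric conclusion
  rw [sinTheta, sinTheta, sinTheta, hM]
  rw [sMin, sMin, sMin, ← he₁, ← he₂, ← he,
    Real.sq_sqrt he0, Real.sq_sqrt he₁0, Real.sq_sqrt he₂0]
  have hmax0 : 0 ≤ max (1 - e₁) (1 - e₂) := le_trans (by linarith) (le_max_left _ _)
  have hmono : Monotone Real.sqrt := fun a b hab => Real.sqrt_le_sqrt hab
  have hmaxeq : max (Real.sqrt (1 - e₁)) (Real.sqrt (1 - e₂))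
      = Real.sqrt (max (1 - e₁) (1 - e₂)) := (hmono.map_max).symm
  rw [hmaxeq, ← Real.sqrt_mul (by norm_num : (0:ℝ) ≤ 2)]
  apply Real.sqrt_le_sqrt
  have h1 := le_max_left (1 - e₁) (1 - e₂)
  have h2 := le_max_right (1 - e₁) (1 - e₂)
  nlinarith [hkey, he₁0, he₂0, he₁1, he₂1]
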